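/- The shift map σ : ω* → ω* and its inverse σ⁻¹ are both chain transitive. -/

import Mathlib

open Set TopologicalSpace

noncomputable section

/-- `ω*`, the Stone–Čech remainder `βω ∖ ω`: the space of free (non-principal)
ultrafilters on `ℕ`, as a subspace of `βℕ = Ultrafilter ℕ` (whose topology is
generated by the clopen sets `A* = {u : A ∈ u}` for `A ⊆ ℕ`). -/
abbrev NStar : Type := {u : Ultrafilter ℕ // ∀ n : ℕ, u ≠ pure n}

lemma free_map_add (u : NStar) : ∀ n : ℕ, Ultrafilter.map (· + 1) u.1 ≠ pure n := by
  intro n hn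
  have h1 : (· + 1) ⁻¹' {n} ∈ u.1 := by
    have : {n} ∈ Ultrafilter.map (· + 1) u.1 := by
      rw [hn]; exact Ultrafilter.mem_pure.mpr rfl
    exact this
  have hfin : ((· + 1) ⁻¹' {n} : Set ℕ).Finite := by
    apply Set.Finite.subset (Set.finite_singleton (n - 1))
    intro x hx
    simp only [Set.mem_preimage, Set.mem_singleton_iff] at hx ⊢
    omega
  obtain ⟨x, -, hx⟩ := Ultrafilter.eq_pure_of_finite_mem hfin h1
  exact u.2 x hx

lemma free_map_sub (u : NStar) : ∀ n : ℕ, Ultrafilter.map (· - 1) u.1 ≠ pure n := by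
  intro n hn
  have h1 : (· - 1) ⁻¹' {n} ∈ u.1 := by
    have : {n} ∈ Ultrafilter.map (· - 1) u.1 := by
      rw [hn]; exact Ultrafilter.mem_pure.mpr rfl
    exact this
  have hfin : ((· - 1) ⁻¹' {n} : Set ℕ).Finite := by
    apply Set.Finite.subset (Set.toFinite {0, 1, n + 1})
    intro x hx
    simp only [Set.mem_preimage, Set.mem_singleton_iff] at hx
    simp only [Set.mem_insert_iff, Set.mem_singleton_iff]
    omega
  obtain ⟨x, -, hx⟩ := Ultrafilter.eq_pure_of_finite_mem hfin h1
  exact u.2 x hx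

lemma ucofinite (u : NStar) : (u.1 : Filter ℕ) ≤ Filter.cofinite := by
  rcases u.1.le_cofinite_or_eq_pure with h | ⟨a, ha⟩
  · exact h
  · exact absurd ha (u.2 a)

lemma left_inv_aux (u : NStar) :
    Ultrafilter.map (· - 1) (Ultrafilter.map (· + 1) u.1) = u.1 := by
  apply Ultrafilter.coe_injective
  rw [Ultrafilter.coe_map, Ultrafilter.coe_map, Filter.map_map]
  have : ((· - 1) ∘ (· + 1) : ℕ → ℕ) = id := by funext x; simp
  rw [this, Filter.map_id]

lemma right_inv_aux (u : NStar) :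
    Ultrafilter.map (· + 1) (Ultrafilter.map (· - 1) u.1) = u.1 := by
  apply Ultrafilter.coe_injective
  rw [Ultrafilter.coe_map, Ultrafilter.coe_map, Filter.map_map]
  have h1 : ((· + 1) ∘ (· - 1) : ℕ → ℕ) =ᶠ[(u.1 : Filter ℕ)] id := by
    apply ucofinite u
    have : {x : ℕ | ¬ ((· + 1) ∘ (· - 1) : ℕ → ℕ) x = id x} ⊆ {0} := by
      intro x hx
      simp only [Function.comp_apply, id_eq, Set.mem_setOf_eq] at hx
      simp only [Set.mem_singleton_iff]
      omega
    exact Set.Finite.subset (Set.finite_singleton 0) this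
  calc Filter.map ((· + 1) ∘ (· - 1)) (u.1 : Filter ℕ)
      = Filter.map id (u.1 : Filter ℕ) := Filter.map_congr h1
    _ = (u.1 : Filter ℕ) := Filter.map_id

lemma continuous_umap (m : ℕ → ℕ) :
    Continuous (Ultrafilter.map m : Ultrafilter ℕ → Ultrafilter ℕ) := by
  rw [ultrafilterBasis_is_basis.continuous_iff]
  rintro _ ⟨s, rfl⟩
  exact ultrafilter_isOpen_basic (m ⁻¹' s)

/-- The shift map on `ω*`: it sends `u` to the ultrafilter generated by
`{A + 1 : A ∈ u}`, i.e. the image ultrafilter of `u` under `n ↦ n + 1`. -/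
def shiftF (u : NStar) : NStar := ⟨Ultrafilter.map (· + 1) u.1, free_map_add u⟩

/-- The inverse of the shift map on `ω*`, induced by the predecessor function. -/
def shiftInvF (u : NStar) : NStar := ⟨Ultrafilter.map (· - 1) u.1, free_map_sub u⟩

/-- The shift map `σ : ω* → ω*` as a self-homeomorphism of `ω*`. -/
def sigmaShift : NStar ≃ₜ NStar :=
  { toFun := shiftF
    invFun := shiftInvF
    left_inv := fun u => Subtype.ext (left_inv_aux u)
    right_inv := fun u => Subtype.ext (right_inv_aux u)
    continuous_toFun :=
      Continuous.subtype_mk ((continuous_umap (· + 1)).comp continuous_subtype_val) _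
    continuous_invFun :=
      Continuous.subtype_mk ((continuous_umap (· - 1)).comp continuous_subtype_val) _ }

/-- `f` and `g` are isomorphic dynamical systems on `ω*`: there is `h ∈ H(ω*)`
with `h ∘ f = g ∘ h`. -/
def Isomorphic (f g : NStar ≃ₜ NStar) : Prop :=
  ∃ h : NStar ≃ₜ NStar, ∀ u, h (f u) = g (h u)

/-- `Iso(σ)`: the set of members of `H(ω*)` isomorphic to the shift map `σ`. -/
def IsoSigma : Set (NStar ≃ₜ NStar) := {h | Isomorphic h sigmaShift}

/-- `Iso(σ⁻¹)`: the set of members of `H(ω*)` isomorphic to `σ⁻¹`. -/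
def IsoSigmaInv : Set (NStar ≃ₜ NStar) := {h | Isomorphic h sigmaShift.symm}

/-- The compact-open topology on the group `H(X)` of self-homeomorphisms of `X`,
generated by the sets `V(K,U) = {h : h[K] ⊆ U}` for `K` compact and `U` open. -/
instance homeoCO {X : Type*} [TopologicalSpace X] : TopologicalSpace (X ≃ₜ X) :=
  TopologicalSpace.generateFrom
    {S : Set (X ≃ₜ X) | ∃ K U : Set X, IsCompact K ∧ IsOpen U ∧
      S = {h : X ≃ₜ X | ∀ x ∈ K, h x ∈ U}}

/-- `h` is chain transitive: for all points `a, b` and every open cover `𝒰` of the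
space, there is a `𝒰`-chain `x_0 = a, x_1, …, x_n = b` (with `n ≥ 1`), i.e. for
each `i < n` there is `U ∈ 𝒰` with `h(x_i) ∈ U` and `x_{i+1} ∈ U`. -/
def ChainTransitive {X : Type*} [TopologicalSpace X] (h : X → X) : Prop :=
  ∀ a b : X, ∀ 𝒰 : Set (Set X), (∀ U ∈ 𝒰, IsOpen U) → ⋃₀ 𝒰 = univ →
    ∃ n : ℕ, 1 ≤ n ∧ ∃ x : ℕ → X, x 0 = a ∧ x n = b ∧
      ∀ i < n, ∃ U ∈ 𝒰, h (x i) ∈ U ∧ x (i + 1) ∈ U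

/-! ### Auxiliary lemmas for the proof -/

lemma exists_free_of_infinite {S : Set ℕ} (hS : S.Infinite) : ∃ u : NStar, S ∈ u.1 := by
  have hne : (Filter.cofinite ⊓ Filter.principal S).NeBot :=
    hS.cofinite_inf_principal_neBot
  have hle : (↑(Ultrafilter.of (Filter.cofinite ⊓ Filter.principal S)) : Filter ℕ) ≤
      Filter.cofinite ⊓ Filter.principal S := Ultrafilter.of_le _
  refine ⟨⟨Ultrafilter.of (Filter.cofinite ⊓ Filter.principal S), ?_⟩, ?_⟩
  · intro n hn
    have h1 : ({n}ᶜ : Set ℕ) ∈ Ultrafilter.of (Filter.cofinite ⊓ Filter.principal S) :=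
      (hle.trans inf_le_left) (by simp [Filter.mem_cofinite])
    rw [hn] at h1
    simp at h1
  · exact (hle.trans inf_le_right) (Filter.mem_principal_self S)

lemma infinite_of_mem_nstar (u : NStar) {A : Set ℕ} (hA : A ∈ u.1) : A.Infinite := by
  by_contra hfin
  rw [Set.not_infinite] at hfin
  obtain ⟨x, -, hx⟩ := Ultrafilter.eq_pure_of_finite_mem hfin hA
  exact u.2 x hx

instance : CompactSpace NStar := by
  have hcl : IsClosed {u : Ultrafilter ℕ | ∀ n : ℕ, u ≠ pure n} := by
    have : {u : Ultrafilter ℕ | ∀ n : ℕ, u ≠ pure n} =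
        (⋃ n : ℕ, {u : Ultrafilter ℕ | ({n} : Set ℕ) ∈ u})ᶜ := by
      ext u
      simp only [Set.mem_setOf_eq, Set.mem_compl_iff, Set.mem_iUnion, not_exists]
      constructor
      · intro h n hn
        obtain ⟨x, hx, hux⟩ := Ultrafilter.eq_pure_of_finite_mem (Set.finite_singleton n) hn
        exact h x hux
      · intro h n hn
        exact h n (hn ▸ Ultrafilter.mem_pure.mpr rfl)
    rw [this]
    exact (isOpen_iUnion fun n => ultrafilter_isOpen_basic {n}).isClosed_compl
  exact isCompact_iff_compactSpace.mp hcl.isCompact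

lemma exists_basic_subset {U : Set NStar} (hU : IsOpen U) {u : NStar} (hu : u ∈ U) :
    ∃ A : Set ℕ, A ∈ u.1 ∧ {v : NStar | A ∈ v.1} ⊆ U := by
  rw [isOpen_induced_iff] at hU
  obtain ⟨V, hV, rfl⟩ := hU
  obtain ⟨B, ⟨A, rfl⟩, huB, hBV⟩ :=
    ultrafilterBasis_is_basis.exists_subset_of_mem_open (show u.1 ∈ V from hu) hV
  exact ⟨A, huB, fun v hv => hBV hv⟩

lemma piece_isOpen (A : Set ℕ) : IsOpen {v : NStar | A ∈ v.1} := by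
  have : {v : NStar | A ∈ v.1} =
      (Subtype.val) ⁻¹' {u : Ultrafilter ℕ | A ∈ u} := rfl
  rw [this]
  exact (ultrafilter_isOpen_basic A).preimage continuous_subtype_val

/-- Key combinatorial reachability lemma. -/
lemma key_reach {ι : Type*} (t : Finset ι) (A : ι → Set ℕ)
    (hinf : ∀ i ∈ t, (A i).Infinite) (N : ℕ)
    (hcov : ∀ m, N ≤ m → ∃ i ∈ t, m ∈ A i)
    (E : ι → ι → Prop)
    (hE : ∀ i ∈ t, ∀ j ∈ t, {m | m ∈ A i ∧ m + 1 ∈ A j}.Infinite → E i j) :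
    ∀ i ∈ t, ∀ j ∈ t, Relation.ReflTransGen E i j := by
  classical
  intro i hi j hj
  set S : Finset ι := t.filter (fun l => Relation.ReflTransGen E i l) with hSdef
  have hiS : i ∈ S := Finset.mem_filter.mpr ⟨hi, Relation.ReflTransGen.refl⟩
  have hSsub : ∀ l ∈ S, l ∈ t := fun l hl => (Finset.mem_filter.mp hl).1
  have hSreach : ∀ l ∈ S, Relation.ReflTransGen E i l :=
    fun l hl => (Finset.mem_filter.mp hl).2
  -- the set of "bad crossings" is finite
  have hWfin : (⋃ l ∈ (↑S : Set ι), ⋃ l' ∈ (↑(t \ S) : Set ι),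
      {m | m ∈ A l ∧ m + 1 ∈ A l'}).Finite := by
    refine Set.Finite.biUnion S.finite_toSet fun l hl =>
      Set.Finite.biUnion (t \ S).finite_toSet fun l' hl' => ?_
    by_contra hfin
    replace hfin : {m | m ∈ A l ∧ m + 1 ∈ A l'}.Infinite := hfin
    obtain ⟨hl't, hl'S⟩ := Finset.mem_sdiff.mp hl'
    exact hl'S (Finset.mem_filter.mpr ⟨hl't,
      (hSreach l hl).tail (hE l (hSsub l hl) l' hl't hfin)⟩)
  obtain ⟨M, hM⟩ := hWfin.bddAbove
  set M' : ℕ := max (M + 1) N with hM'def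
  -- beyond M', membership in ⋃_{l ∈ S} A l propagates
  have hstep : ∀ m, M' ≤ m → (∃ l ∈ S, m ∈ A l) → ∃ l' ∈ S, m + 1 ∈ A l' := by
    rintro m hm ⟨l, hl, hml⟩
    obtain ⟨l', hl't, hml'⟩ := hcov (m + 1) (by omega)
    by_cases h : l' ∈ S
    · exact ⟨l', h, hml'⟩
    · exfalso
      have hmW : m ∈ ⋃ l ∈ (↑S : Set ι), ⋃ l' ∈ (↑(t \ S) : Set ι),
          {m | m ∈ A l ∧ m + 1 ∈ A l'} := by
        refine Set.mem_biUnion hl ?_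
        exact Set.mem_biUnion (by simp [Finset.mem_sdiff, hl't, h]) ⟨hml, hml'⟩
      have := hM hmW
      omega
  -- find a starting point in A i beyond M'
  have hgt : ∃ m0 ∈ A i, M' ≤ m0 := by
    by_contra hcon
    push_neg at hcon
    exact hinf i hi (Set.Finite.subset (Set.finite_Iio M') fun m hm => hcon m hm)
  obtain ⟨m0, hm0A, hm0⟩ := hgt
  have hall : ∀ m, m0 ≤ m → ∃ l ∈ S, m ∈ A l := by
    intro m hm
    induction m, hm using Nat.le_induction with
    | base => exact ⟨i, hiS, hm0A⟩
    | succ m hm ih => exact hstep m (le_trans hm0 hm) ih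
  -- pigeonhole: some l ∈ S has an infinite crossing into A j
  have hsub : A j \ Set.Iic m0 ⊆
      ⋃ l ∈ (↑S : Set ι), (fun p => p + 1) '' {p | p ∈ A l ∧ p + 1 ∈ A j} := by
    rintro m ⟨hmj, hmgt⟩
    simp only [Set.mem_Iic, not_le] at hmgt
    obtain ⟨l, hl, hml⟩ := hall (m - 1) (by omega)
    refine Set.mem_biUnion hl ⟨m - 1, ⟨hml, by rw [Nat.sub_add_cancel (by omega)]; exact hmj⟩,
      by show m - 1 + 1 = m; omega⟩
  have hexl : ∃ l ∈ S, {p | p ∈ A l ∧ p + 1 ∈ A j}.Infinite := by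
    by_contra hcon
    push_neg at hcon
    have : (A j \ Set.Iic m0).Finite :=
      Set.Finite.subset (Set.Finite.biUnion S.finite_toSet
        fun l hl => ((hcon l hl).image _)) hsub
    exact ((hinf j hj).diff (Set.finite_Iic m0)) this
  obtain ⟨l, hl, hlinf⟩ := hexl
  exact (hSreach l hl).tail (hE l (hSsub l hl) j hj hlinf)

/-- Generic chain builder from a path in the piece graph. -/
lemma build_chain {ι : Type*} (h : NStar → NStar) (A : ι → Set ℕ) (E : ι → ι → Prop)
    (𝒰 : Set (Set NStar)) (hpiece : ∀ i : ι, ∃ U ∈ 𝒰, {v : NStar | A i ∈ v.1} ⊆ U)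
    (hstep : ∀ i j, E i j → ∃ v : NStar, A i ∈ v.1 ∧ A j ∈ (h v).1)
    (a b : NStar) (i0 j0 : ι) (ha : A i0 ∈ (h a).1) (hb : A j0 ∈ b.1)
    (hpath : Relation.ReflTransGen E i0 j0) :
    ∃ n : ℕ, 1 ≤ n ∧ ∃ x : ℕ → NStar, x 0 = a ∧ x n = b ∧
      ∀ i < n, ∃ U ∈ 𝒰, h (x i) ∈ U ∧ x (i + 1) ∈ U := by
  classical
  have Q : ∀ j : ι, Relation.ReflTransGen E i0 j →
      ∃ n : ℕ, ∃ x : ℕ → NStar, x 0 = a ∧ A j ∈ (h (x n)).1 ∧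
        ∀ i < n, ∃ U ∈ 𝒰, h (x i) ∈ U ∧ x (i + 1) ∈ U := by
    intro j hj
    induction hj with
    | refl => exact ⟨0, fun _ => a, rfl, ha, fun i hi => absurd hi (by omega)⟩
    | @tail l j hpl hE ih =>
      obtain ⟨n, x, hx0, hxl, hchain⟩ := ih
      obtain ⟨v, hvl, hvj⟩ := hstep l j hE
      refine ⟨n + 1, Function.update x (n + 1) v, ?_, ?_, ?_⟩
      · rw [Function.update_of_ne (by omega)]; exact hx0
      · rw [Function.update_self]; exact hvj
      · intro i hi
        rcases Nat.lt_or_ge i n with hlt | hge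
        · obtain ⟨U, hU, h1, h2⟩ := hchain i hlt
          refine ⟨U, hU, ?_, ?_⟩
          · rw [Function.update_of_ne (by omega)]; exact h1
          · rw [Function.update_of_ne (by omega)]; exact h2
        · have hieq : i = n := by omega
          subst hieq
          obtain ⟨U, hU, hsubU⟩ := hpiece l
          refine ⟨U, hU, ?_, ?_⟩
          · rw [Function.update_of_ne (by omega)]; exact hsubU hxl
          · rw [Function.update_self]; exact hsubU hvl
  obtain ⟨n, x, hx0, hxj, hchain⟩ := Q j0 hpath
  refine ⟨n + 1, by omega, Function.update x (n + 1) b, ?_, ?_, ?_⟩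
  · rw [Function.update_of_ne (by omega)]; exact hx0
  · rw [Function.update_self]
  · intro i hi
    rcases Nat.lt_or_ge i n with hlt | hge
    · obtain ⟨U, hU, h1, h2⟩ := hchain i hlt
      refine ⟨U, hU, ?_, ?_⟩
      · rw [Function.update_of_ne (by omega)]; exact h1
      · rw [Function.update_of_ne (by omega)]; exact h2
    · have hieq : i = n := by omega
      subst hieq
      obtain ⟨U, hU, hsubU⟩ := hpiece j0
      refine ⟨U, hU, ?_, ?_⟩
      · rw [Function.update_of_ne (by omega)]; exact hsubU hxj
      · rw [Function.update_self]; exact hsubU hb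

/-- Shared setup: extract a finite family of infinite sets refining the cover. -/
lemma setup_cover (𝒰 : Set (Set NStar)) (hop : ∀ U ∈ 𝒰, IsOpen U) (hcov : ⋃₀ 𝒰 = univ) :
    ∃ (A : NStar → Set ℕ) (t : Finset NStar) (N : ℕ),
      (∀ u : NStar, ∃ U ∈ 𝒰, {v : NStar | A u ∈ v.1} ⊆ U) ∧
      (∀ u : NStar, (A u).Infinite) ∧
      (∀ m, N ≤ m → ∃ i ∈ t, m ∈ A i) ∧
      (∀ w : NStar, ∃ i ∈ t, A i ∈ w.1) := by
  classical
  have hchoice : ∀ u : NStar, ∃ A : Set ℕ, A ∈ u.1 ∧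
      ∃ U ∈ 𝒰, {v : NStar | A ∈ v.1} ⊆ U := by
    intro u
    have : u ∈ ⋃₀ 𝒰 := hcov ▸ Set.mem_univ u
    obtain ⟨U, hU, huU⟩ := this
    obtain ⟨A, hAu, hAsub⟩ := exists_basic_subset (hop U hU) huU
    exact ⟨A, hAu, U, hU, hAsub⟩
  choose A hAmem hApiece using hchoice
  have hAinf : ∀ u : NStar, (A u).Infinite := fun u => infinite_of_mem_nstar u (hAmem u)
  -- compactness: finite subcover by the pieces
  have hcov' : (univ : Set NStar) ⊆ ⋃ u : NStar, {v : NStar | A u ∈ v.1} :=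
    fun w _ => Set.mem_iUnion.mpr ⟨w, hAmem w⟩
  obtain ⟨t, ht⟩ := IsCompact.elim_finite_subcover isCompact_univ
    (fun u : NStar => {v : NStar | A u ∈ v.1}) (fun u => piece_isOpen (A u)) hcov'
  have hmem : ∀ w : NStar, ∃ i ∈ t, A i ∈ w.1 := by
    intro w
    have := ht (Set.mem_univ w)
    simpa using this
  -- complement of the union of the A i (i ∈ t) is finite
  have hCfin : ((⋃ i ∈ (↑t : Set NStar), A i)ᶜ).Finite := by
    by_contra hfin
    replace hfin : ((⋃ i ∈ (↑t : Set NStar), A i)ᶜ).Infinite := hfin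
    obtain ⟨w, hw⟩ := exists_free_of_infinite hfin
    obtain ⟨i, hit, hiw⟩ := hmem w
    have hint : A i ∩ (⋃ i ∈ (↑t : Set NStar), A i)ᶜ ∈ w.1 := Filter.inter_mem hiw hw
    obtain ⟨m, hm1, hm2⟩ := Ultrafilter.nonempty_of_mem hint
    exact hm2 (Set.mem_biUnion hit hm1)
  obtain ⟨N, hN⟩ := hCfin.bddAbove
  refine ⟨A, t, N + 1, hApiece, hAinf, ?_, hmem⟩
  intro m hm
  by_cases h : m ∈ ⋃ i ∈ (↑t : Set NStar), A i
  · obtain ⟨i, hit, hmi⟩ := Set.mem_iUnion₂.mp h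
    exact ⟨i, hit, hmi⟩
  · have := hN (Set.mem_compl h)
    omega

/-- The shift map `σ : ω* → ω*` and its inverse `σ⁻¹` are both chain transitive. -/
theorem stmt_10 :
    ChainTransitive (⇑sigmaShift) ∧ ChainTransitive (⇑sigmaShift.symm) := by
  constructor
  · intro a b 𝒰 hop hcov
    obtain ⟨A, t, N, hpiece, hinf, hN, hmem⟩ := setup_cover 𝒰 hop hcov
    set E : NStar → NStar → Prop :=
      fun i j => {m | m ∈ A i ∧ m + 1 ∈ A j}.Infinite with hEdef
    have hreach := key_reach t A (fun i _ => hinf i) N hN E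
      (fun i _ j _ hI => hI)
    obtain ⟨i0, hi0t, hi0⟩ := hmem (sigmaShift a)
    obtain ⟨j0, hj0t, hj0⟩ := hmem b
    refine build_chain (⇑sigmaShift) A E 𝒰 hpiece ?_ a b i0 j0 hi0 hj0
      (hreach i0 hi0t j0 hj0t)
    intro i j hij
    obtain ⟨v, hv⟩ := exists_free_of_infinite (S := {m | m ∈ A i ∧ m + 1 ∈ A j}) hij
    refine ⟨v, ?_, ?_⟩
    · exact Filter.mem_of_superset hv fun m hm => hm.1
    · show A j ∈ Ultrafilter.map (· + 1) v.1
      rw [Ultrafilter.mem_map]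
      exact Filter.mem_of_superset hv fun m hm => hm.2
  · intro a b 𝒰 hop hcov
    obtain ⟨A, t, N, hpiece, hinf, hN, hmem⟩ := setup_cover 𝒰 hop hcov
    set E : NStar → NStar → Prop :=
      fun i j => {m | m ∈ A i ∧ m + 1 ∈ A j}.Infinite with hEdef
    have hreach := key_reach t A (fun i _ => hinf i) N hN E
      (fun i _ j _ hI => hI)
    obtain ⟨i0, hi0t, hi0⟩ := hmem (sigmaShift.symm a)
    obtain ⟨j0, hj0t, hj0⟩ := hmem b
    refine build_chain (⇑sigmaShift.symm) A (Function.swap E) 𝒰 hpiece ?_ a b i0 j0 hi0 hj0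
      (Relation.ReflTransGen.swap i0 j0 (hreach j0 hj0t i0 hi0t))
    intro i j hij
    have hij' : {m | m ∈ A j ∧ m + 1 ∈ A i}.Infinite := hij
    have himg : ((fun m => m + 1) '' {m | m ∈ A j ∧ m + 1 ∈ A i}).Infinite :=
      hij'.image (Set.injOn_of_injective (add_left_injective 1))
    obtain ⟨v, hv⟩ := exists_free_of_infinite himg
    refine ⟨v, ?_, ?_⟩
    · refine Filter.mem_of_superset hv ?_
      rintro p ⟨m, ⟨hmj, hmi⟩, rfl⟩
      exact hmi
    · show A j ∈ Ultrafilter.map (· - 1) v.1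
      rw [Ultrafilter.mem_map]
      refine Filter.mem_of_superset hv ?_
      rintro p ⟨m, ⟨hmj, hmi⟩, rfl⟩
      simpa using hmj
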